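/- arXiv:2503.03482 — 4 statements merged into one kernel-verified Lean document; each statement's English description precedes it below -/
import Mathlib

section
/- For every integer n ≥ 3 and all real λ > 0 and z > 0, the improper integral ∫₀^{z^{n/(n−1)}} (1/(n√λ))·(z^{2/(n−1)} − x^{2/n})^{−1/2} dx converges and equals (z/(2√λ))·√π·Γ(n/2)/Γ((n+1)/2). -/
open Set Filter Real MeasureTheory intervalIntegral

lemma sin_pow_halfpi (m : ℕ) :
    ∫ θ in (0:ℝ)..(π/2), Real.sin θ ^ m =
      Real.sqrt π / 2 * Real.Gamma (((m : ℝ) + 1) / 2) / Real.Gamma ((m : ℝ) / 2 + 1) := by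
  induction m using Nat.twoStepInduction with
  | zero =>
    rw [show ((((0:ℕ):ℝ)) + 1)/2 = 1/2 by norm_num, show (((0:ℕ):ℝ))/2 + 1 = 1 by norm_num,
      Real.Gamma_one, Real.Gamma_one_half_eq]
    rw [div_one]
    simp only [pow_zero, intervalIntegral.integral_const, smul_eq_mul, mul_one, sub_zero]
    nlinarith [Real.mul_self_sqrt Real.pi_pos.le]
  | one =>
    rw [show ((((1:ℕ):ℝ)) + 1)/2 = 1 by norm_num, show (((1:ℕ):ℝ))/2 + 1 = 1/2 + 1 by norm_num,
      Real.Gamma_one, Real.Gamma_add_one (by norm_num : (1/2:ℝ) ≠ 0), Real.Gamma_one_half_eq]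
    simp only [pow_one]
    rw [integral_sin]
    simp
    rw [eq_comm, div_eq_one_iff_eq (by positivity)]
    ring
  | more m ih _ =>
    rw [integral_sin_pow]
    simp only [Real.sin_zero, Real.cos_pi_div_two, Real.sin_pi_div_two, Real.cos_zero]
    rw [ih]
    push_cast
    rw [show ((m:ℝ) + 2 + 1) / 2 = ((m:ℝ) + 1)/2 + 1 by ring,
      show ((m:ℝ) + 2) / 2 + 1 = ((m:ℝ)/2 + 1) + 1 by ring,
      Real.Gamma_add_one (show ((m:ℝ)+1)/2 ≠ 0 by positivity),
      Real.Gamma_add_one (show ((m:ℝ)/2 + 1) ≠ 0 by positivity)]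
    have g1 : Real.Gamma (((m:ℝ)+1)/2) ≠ 0 := (Real.Gamma_pos_of_pos (by positivity)).ne'
    have g2 : Real.Gamma ((m:ℝ)/2+1) ≠ 0 := (Real.Gamma_pos_of_pos (by positivity)).ne'
    field_simp
    ring

/-- The half-length `β(z)` of the vanishing interval of the comparison profile:
`∫₀^{z^{n/(n−1)}} (1/(n√λ))·(z^{2/(n−1)} − x^{2/n})^{−1/2} dx
  = (z/(2√λ))·√π·Γ(n/2)/Γ((n+1)/2)`. -/
theorem beta_integral (n : ℕ) (hn : 3 ≤ n) (lam z : ℝ) (hlam : 0 < lam) (hz : 0 < z) :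
    IntervalIntegrable
      (fun x : ℝ => (1 / (n * Real.sqrt lam)) *
        (z ^ ((2 : ℝ) / ((n : ℝ) - 1)) - x ^ ((2 : ℝ) / n)) ^ (-(1 : ℝ) / 2))
      volume 0 (z ^ ((n : ℝ) / ((n : ℝ) - 1))) ∧
    ∫ x in (0 : ℝ)..(z ^ ((n : ℝ) / ((n : ℝ) - 1))),
        (1 / (n * Real.sqrt lam)) *
          (z ^ ((2 : ℝ) / ((n : ℝ) - 1)) - x ^ ((2 : ℝ) / n)) ^ (-(1 : ℝ) / 2) =
      (z / (2 * Real.sqrt lam)) * Real.sqrt π * Real.Gamma ((n : ℝ) / 2) /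
        Real.Gamma (((n : ℝ) + 1) / 2) := by
  have hN : (3:ℝ) ≤ (n:ℝ) := by exact_mod_cast hn
  have hNpos : (0:ℝ) < (n:ℝ) := by linarith
  have hN1 : (0:ℝ) < (n:ℝ) - 1 := by linarith
  have hn0 : n ≠ 0 := by omega
  have hsl : (0:ℝ) < Real.sqrt lam := Real.sqrt_pos.mpr hlam
  set c : ℝ := z ^ ((2 : ℝ) / ((n : ℝ) - 1)) with hcdef
  set A : ℝ := z ^ ((n : ℝ) / ((n : ℝ) - 1)) with hAdef
  have hc : 0 < c := Real.rpow_pos_of_pos hz _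
  have hA : 0 < A := Real.rpow_pos_of_pos hz _
  set C : ℝ := c ^ ((n:ℝ) / 2) with hCdef
  have hC : 0 < C := Real.rpow_pos_of_pos hc _
  have hCA : C = A := by
    rw [hCdef, hcdef, hAdef, ← Real.rpow_mul hz.le]
    congr 1
    field_simp
  have hzc : c ^ (((n:ℝ) - 1) / 2) = z := by
    rw [hcdef, ← Real.rpow_mul hz.le]
    rw [show (2 / ((n:ℝ) - 1)) * (((n:ℝ) - 1)/2) = 1 by field_simp]
    exact Real.rpow_one z
  set F : ℝ → ℝ := fun x => (1 / (n * Real.sqrt lam)) *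
      (c - x ^ ((2 : ℝ) / n)) ^ (-(1 : ℝ) / 2) with hFdef
  set f : ℝ → ℝ := fun θ => C * Real.sin θ ^ n with hfdef
  set f' : ℝ → ℝ := fun θ => C * ((n:ℝ) * Real.sin θ ^ (n-1) * Real.cos θ) with hf'def
  set s : Set ℝ := Ioo (0:ℝ) (π/2) with hsdef
  have hms : MeasurableSet s := measurableSet_Ioo
  have hderiv : ∀ θ ∈ s, HasDerivWithinAt f (f' θ) s θ := fun θ _ =>
    (((Real.hasDerivAt_sin θ).pow n).const_mul C).hasDerivWithinAt
  have hsinpos : ∀ θ ∈ s, 0 < Real.sin θ := fun θ hθ =>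
    Real.sin_pos_of_pos_of_lt_pi hθ.1 (by nlinarith [Real.pi_pos, hθ.2])
  have hcospos : ∀ θ ∈ s, 0 < Real.cos θ := fun θ hθ =>
    Real.cos_pos_of_mem_Ioo ⟨by nlinarith [Real.pi_pos, hθ.1], hθ.2⟩
  have hmono : StrictMonoOn f s := by
    intro θ₁ h₁ θ₂ h₂ hlt
    have hs1 : Real.sin θ₁ < Real.sin θ₂ := by
      apply Real.strictMonoOn_sin ⟨by nlinarith [Real.pi_pos, h₁.1], h₁.2.le⟩
        ⟨by nlinarith [Real.pi_pos, h₂.1], h₂.2.le⟩ hlt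
    exact mul_lt_mul_of_pos_left
      (pow_lt_pow_left₀ hs1 (hsinpos θ₁ h₁).le hn0) hC
  have hinj : InjOn f s := hmono.injOn
  have hsinlt : ∀ θ ∈ s, Real.sin θ < 1 := by
    intro θ hθ
    calc Real.sin θ < Real.sin (π/2) := by
          apply Real.strictMonoOn_sin ⟨by nlinarith [Real.pi_pos, hθ.1], hθ.2.le⟩
            ⟨by nlinarith [Real.pi_pos], le_refl _⟩ hθ.2
      _ = 1 := Real.sin_pi_div_two
  have himg : f '' s = Ioo 0 A := by
    apply Subset.antisymm
    · rintro x ⟨θ, hθ, rfl⟩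
      constructor
      · exact mul_pos hC (pow_pos (hsinpos θ hθ) n)
      · rw [← hCA]
        show C * Real.sin θ ^ n < C
        nlinarith [pow_lt_one₀ (hsinpos θ hθ).le (hsinlt θ hθ) hn0, hC]
    · have hcont : ContinuousOn f (Icc 0 (π/2)) := by fun_prop
      have := intermediate_value_Ioo (by positivity : (0:ℝ) ≤ π/2) hcont
      have hf0 : f 0 = 0 := by simp [hfdef, Real.sin_zero, zero_pow hn0]
      have hfp : f (π/2) = A := by simp [hfdef, Real.sin_pi_div_two, one_pow, ← hCA]
      rw [hf0, hfp] at this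
      exact this
  have key : ∀ θ ∈ s, |f' θ| * F (f θ) = (z / Real.sqrt lam) * Real.sin θ ^ (n-1) := by
    intro θ hθ
    have hsp := hsinpos θ hθ
    have hcp := hcospos θ hθ
    have e1 : (C * Real.sin θ ^ n) ^ ((2:ℝ)/n) = c * Real.sin θ ^ 2 := by
      rw [Real.mul_rpow hC.le (pow_nonneg hsp.le n), hCdef,
        ← Real.rpow_mul hc.le, show ((n:ℝ)/2) * (2/(n:ℝ)) = 1 by field_simp,
        Real.rpow_one, ← Real.rpow_natCast (Real.sin θ) n, ← Real.rpow_mul hsp.le,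
        show ((n:ℝ)) * (2/(n:ℝ)) = 2 by field_simp,
        show (2:ℝ) = ((2:ℕ):ℝ) by norm_num, Real.rpow_natCast]
    have e2 : (c * Real.cos θ ^ 2) ^ (-(1:ℝ)/2) =
        c ^ (-(1:ℝ)/2) * (Real.cos θ)⁻¹ := by
      rw [Real.mul_rpow hc.le (sq_nonneg _)]
      congr 1
      rw [← Real.rpow_natCast (Real.cos θ) 2, ← Real.rpow_mul hcp.le,
        show ((2:ℕ):ℝ) * (-(1:ℝ)/2) = -1 by norm_num, Real.rpow_neg_one]
    have e3 : C * c ^ (-(1:ℝ)/2) = z := by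
      rw [hCdef, ← Real.rpow_add hc, show (n:ℝ)/2 + -(1:ℝ)/2 = ((n:ℝ)-1)/2 by ring, hzc]
    have habs : |f' θ| = f' θ := abs_of_pos (by
      apply mul_pos hC
      exact mul_pos (mul_pos hNpos (pow_pos hsp n.pred)) hcp)
    rw [habs, hFdef, hf'def]
    simp only
    rw [show f θ = C * Real.sin θ ^ n from rfl, e1,
      show c - c * Real.sin θ ^ 2 = c * Real.cos θ ^ 2 by rw [Real.cos_sq']; ring, e2, ← e3]
    field_simp
  have hG : IntegrableOn (fun θ => (z / Real.sqrt lam) * Real.sin θ ^ (n-1)) s volume := by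
    apply (intervalIntegrable_iff_integrableOn_Ioo_of_le (by positivity)).mp
    apply Continuous.intervalIntegrable
    fun_prop
  have hkey' : EqOn (fun θ => |f' θ| • F (f θ))
      (fun θ => (z / Real.sqrt lam) * Real.sin θ ^ (n-1)) s := by
    intro θ hθ; simpa [smul_eq_mul] using key θ hθ
  have hFint : IntegrableOn F (Ioo 0 A) volume := by
    rw [← himg]
    rw [integrableOn_image_iff_integrableOn_abs_deriv_smul hms hderiv hinj F]
    exact hG.congr_fun hkey'.symm hms
  constructor
  · exact (intervalIntegrable_iff_integrableOn_Ioo_of_le hA.le).mpr hFint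
  · have step1 : ∫ x in (0:ℝ)..A, F x = ∫ x in Ioo (0:ℝ) A, F x := by
      rw [intervalIntegral.integral_of_le hA.le, MeasureTheory.integral_Ioc_eq_integral_Ioo]
    have step2 : ∫ x in Ioo (0:ℝ) A, F x
        = ∫ θ in s, (z / Real.sqrt lam) * Real.sin θ ^ (n-1) := by
      rw [← himg, integral_image_eq_integral_abs_deriv_smul hms hderiv hinj F]
      exact MeasureTheory.setIntegral_congr_fun hms hkey'
    have step3 : ∫ θ in s, (z / Real.sqrt lam) * Real.sin θ ^ (n-1)
        = (z / Real.sqrt lam) * ∫ θ in (0:ℝ)..(π/2), Real.sin θ ^ (n-1) := by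
      rw [MeasureTheory.integral_const_mul, intervalIntegral.integral_of_le (by positivity),
        MeasureTheory.integral_Ioc_eq_integral_Ioo]
    have hcast : ((n - 1 : ℕ) : ℝ) = (n:ℝ) - 1 := by
      have : (1:ℕ) ≤ n := by omega
      push_cast [Nat.cast_sub this]
      ring
    rw [step1, step2, step3, sin_pow_halfpi (n-1), hcast,
      show ((n:ℝ) - 1 + 1)/2 = (n:ℝ)/2 by ring,
      show ((n:ℝ) - 1)/2 + 1 = ((n:ℝ) + 1)/2 by ring]
    ring
end

section
/- Let n ≥ 3 be an integer, λ > 0, z > 0, and b > 0. Suppose f : [0, b] → ℝ is continuous, continuously differentiable on [0, b), twice differentiable on [0, b), and satisfies: f''(v) = −λ·n·f(v)^{(2−n)/n} and f(v) > 0 for all v ∈ [0, b), f(0) = z^{n/(n−1)}, f'(0) = 0, and f(b) = 0. Then b = (z/(2√λ))·√π·Γ(n/2)/Γ((n+1)/2). -/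
open Set Filter Real Topology

lemma wallis_gamma : ∀ k : ℕ, (∫ x in (0:ℝ)..(π/2), Real.sin x ^ k) =
    Real.sqrt π / 2 * Real.Gamma ((k + 1) / 2) / Real.Gamma ((k : ℝ) / 2 + 1) := by
  have hπ : (0:ℝ) < π := Real.pi_pos
  intro k
  induction k using Nat.twoStepInduction with
  | zero =>
    simp only [Nat.cast_zero, pow_zero, zero_add, zero_div]
    rw [integral_one, Real.Gamma_one, show ((1:ℝ)/2) = 1/2 by norm_num,
      Real.Gamma_one_half_eq, div_one, div_mul_eq_mul_div, Real.mul_self_sqrt hπ.le]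
    ring
  | one =>
    have h32 : Real.Gamma ((1:ℝ)/2 + 1) = Real.sqrt π / 2 := by
      rw [Real.Gamma_add_one (by norm_num), Real.Gamma_one_half_eq]; ring
    have hs : Real.sqrt π ≠ 0 := by positivity
    simp only [Nat.cast_one, pow_one]
    rw [integral_sin, Real.cos_zero, Real.cos_pi_div_two,
      show ((1:ℝ)+1)/2 = 1 by norm_num, Real.Gamma_one, h32]
    field_simp
    norm_num
  | more k ih _ =>
    have key := @integral_sin_pow 0 (π/2) k
    rw [Real.sin_zero, Real.cos_pi_div_two] at key
    have hA : 0 < Real.Gamma (((k:ℝ) + 1) / 2) := Real.Gamma_pos_of_pos (by positivity)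
    have hB : 0 < Real.Gamma ((k:ℝ) / 2 + 1) := Real.Gamma_pos_of_pos (by positivity)
    rw [key, ih]
    push_cast
    have g1 : Real.Gamma (((k:ℝ)+1)/2 + 1) = (((k:ℝ)+1)/2) * Real.Gamma (((k:ℝ)+1)/2) :=
      Real.Gamma_add_one (by positivity)
    have g2 : Real.Gamma (((k:ℝ)/2 + 1) + 1) = ((k:ℝ)/2 + 1) * Real.Gamma ((k:ℝ)/2 + 1) :=
      Real.Gamma_add_one (by positivity)
    rw [show ((k:ℝ) + 2 + 1) / 2 = ((k:ℝ)+1)/2 + 1 by ring,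
        show ((k:ℝ) + 2) / 2 + 1 = ((k:ℝ)/2 + 1) + 1 by ring, g1, g2]
    have hk2 : ((k:ℝ) + 2) ≠ 0 := by positivity
    field_simp
    ring

set_option maxHeartbeats 1000000 in
/-- The first positive zero of the solution of `f'' = −λ n f^{(2−n)/n}` with
`f(0) = z^{n/(n−1)}`, `f'(0) = 0` is exactly `β(z) = (z/(2√λ))·√π·Γ(n/2)/Γ((n+1)/2)`. -/
theorem first_zero_of_profile (n : ℕ) (hn : 3 ≤ n) (lam z b : ℝ)
    (hlam : 0 < lam) (hz : 0 < z) (hb : 0 < b)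
    (f : ℝ → ℝ)
    (hfcont : ContinuousOn f (Icc 0 b))
    (hfdiff : ∀ v ∈ Ico 0 b, DifferentiableWithinAt ℝ f (Ico 0 b) v)
    (hf'cont : ContinuousOn (derivWithin f (Ico 0 b)) (Ico 0 b))
    (hf'diff : ∀ v ∈ Ico 0 b,
      DifferentiableWithinAt ℝ (derivWithin f (Ico 0 b)) (Ico 0 b) v)
    (hODE : ∀ v ∈ Ico 0 b,
      derivWithin (derivWithin f (Ico 0 b)) (Ico 0 b) v =
        -lam * n * f v ^ ((2 - (n : ℝ)) / n))
    (hfpos : ∀ v ∈ Ico 0 b, 0 < f v)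
    (hf0 : f 0 = z ^ ((n : ℝ) / ((n : ℝ) - 1)))
    (hf'0 : derivWithin f (Ico 0 b) 0 = 0)
    (hfb : f b = 0) :
    b = (z / (2 * Real.sqrt lam)) * Real.sqrt π * Real.Gamma ((n : ℝ) / 2) /
      Real.Gamma (((n : ℝ) + 1) / 2) := by
  have hN3 : (3:ℝ) ≤ (n:ℝ) := by exact_mod_cast hn
  set N : ℝ := (n:ℝ) with hNdef
  have hN0 : (0:ℝ) < N := by linarith
  have hN1 : (0:ℝ) < N - 1 := by linarith
  set I : Set ℝ := Ico 0 b with hI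
  set F : ℝ → ℝ := derivWithin f I with hFdef
  set c : ℝ := z ^ (1/(N-1)) with hcdef
  have hc : 0 < c := Real.rpow_pos_of_pos hz _
  have h0I : (0:ℝ) ∈ I := ⟨le_refl 0, hb⟩
  -- rpow facts
  have hcz : c ^ (N - 1) = z := by
    rw [hcdef, ← Real.rpow_mul hz.le, show 1/(N-1)*(N-1) = 1 by field_simp, Real.rpow_one]
  have hf0_2N : f 0 ^ ((2:ℝ)/N) = c ^ 2 := by
    rw [hf0, ← Real.rpow_mul hz.le, hcdef, ← Real.rpow_natCast (z ^ (1/(N-1))) 2,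
      ← Real.rpow_mul hz.le]
    norm_num
    rw [div_mul_div_comm, mul_comm]
    congr 1
    field_simp
  have hf0_1N : f 0 ^ ((1:ℝ)/N) = c := by
    rw [hf0, ← Real.rpow_mul hz.le, hcdef]
    congr 1
    field_simp
  -- step A : derivative packaging
  have hFd : ∀ v ∈ I, HasDerivWithinAt f (F v) I v :=
    fun v hv => (hfdiff v hv).hasDerivWithinAt
  have hF'd : ∀ v ∈ I, HasDerivWithinAt F (-lam*N*(f v)^((2-N)/N)) I v :=
    fun v hv => hODE v hv ▸ (hf'diff v hv).hasDerivWithinAt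
  -- step B : energy conservation
  set E : ℝ → ℝ := fun w => (F w)^2 + lam*N^2*(f w)^((2:ℝ)/N) with hEdef
  have hEd : ∀ v ∈ I, HasDerivWithinAt E 0 I v := by
    intro v hv
    have d1 : HasDerivWithinAt (fun w => (F w)^2)
        ((2:ℕ) * F v ^ (2-1) * (-lam*N*(f v)^((2-N)/N))) I v := (hF'd v hv).pow 2
    have d2 : HasDerivWithinAt (fun w => (f w)^((2:ℝ)/N))
        (F v * ((2:ℝ)/N) * (f v)^((2:ℝ)/N - 1)) I v :=
      (hFd v hv).rpow_const (Or.inl (hfpos v hv).ne')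
    have := d1.add (d2.const_mul (lam*N^2))
    refine this.congr_deriv ?_
    symm
    have hexp : (2:ℝ)/N - 1 = (2-N)/N := by field_simp
    rw [hexp]
    push_cast
    field_simp
    ring
  have hEcont : ContinuousOn E I := by
    apply (hf'cont.pow 2).add
    exact continuousOn_const.mul ((hfcont.mono Ico_subset_Icc_self).rpow_const
      (fun x hx => Or.inl (hfpos x hx).ne'))
  have hEconst : ∀ v ∈ I, E v = E 0 := by
    intro v hv
    have hsub : Icc 0 v ⊆ I := by
      rw [hI]; exact Icc_subset_Ico_right hv.2
    have := constant_of_has_deriv_right_zero (f := E) (a := 0) (b := v)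
      (hEcont.mono hsub) ?_ v ⟨hv.1, le_refl v⟩
    · exact this
    · intro x hx
      have hxI : x ∈ I := ⟨hx.1, lt_of_lt_of_le hx.2 hv.2.le⟩
      refine (hEd x hxI).mono_of_mem_nhdsWithin ?_
      refine mem_nhdsWithin.mpr ⟨Iio b, isOpen_Iio, hxI.2, ?_⟩
      rintro y ⟨hy1, hy2⟩
      exact ⟨le_trans hx.1 hy2, hy1⟩
  have hE0 : E 0 = lam*N^2*c^2 := by
    simp only [hEdef, hf'0, hf0_2N]; ring
  have energy : ∀ v ∈ I, (F v)^2 = lam*N^2*(c^2 - (f v)^((2:ℝ)/N)) := by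
    intro v hv
    have h := hEconst v hv
    rw [hE0] at h
    simp only [hEdef] at h
    linarith [h]
  -- step C : F is strictly decreasing, hence negative on (0,b)
  have hnhds : ∀ x ∈ Ioo 0 b, I ∈ 𝓝 x := fun x hx => by
    rw [hI]; exact Ico_mem_nhds hx.1 hx.2
  have hFanti : StrictAntiOn F I := by
    apply strictAntiOn_of_deriv_neg (convex_Ico 0 b) hf'cont
    intro x hx
    simp only [hI, interior_Ico] at hx
    have hxI : x ∈ I := Ioo_subset_Ico_self hx
    rw [← derivWithin_of_mem_nhds (hnhds x hx), hODE x hxI]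
    have : 0 < f x ^ ((2-N)/N) := Real.rpow_pos_of_pos (hfpos x hxI) _
    nlinarith [mul_pos (mul_pos hlam hN0) this]
  have hFneg : ∀ v ∈ Ioo 0 b, F v < 0 := by
    intro v hv
    have := hFanti h0I (Ioo_subset_Ico_self hv) hv.1
    rwa [hf'0] at this
  -- step D : f is strictly decreasing on [0,b]
  have hfanti : StrictAntiOn f (Icc 0 b) := by
    apply strictAntiOn_of_deriv_neg (convex_Icc 0 b) hfcont
    intro x hx
    simp only [interior_Icc] at hx
    rw [← derivWithin_of_mem_nhds (hnhds x hx)]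
    exact hFneg x hx
  have hflt : ∀ v ∈ Ioo 0 b, f v < f 0 := fun v hv =>
    hfanti ⟨le_refl 0, hb.le⟩ ⟨hv.1.le, hv.2.le⟩ hv.1
  -- step E : explicit formula for F
  have hDpos : ∀ v ∈ Ioo 0 b, 0 < c^2 - (f v)^((2:ℝ)/N) := by
    intro v hv
    have h1 : (f v)^((2:ℝ)/N) < (f 0)^((2:ℝ)/N) :=
      Real.rpow_lt_rpow (hfpos v (Ioo_subset_Ico_self hv)).le (hflt v hv) (by positivity)
    rw [hf0_2N] at h1
    linarith
  have hFval : ∀ v ∈ Ioo 0 b,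
      F v = -(N * Real.sqrt lam * Real.sqrt (c^2 - (f v)^((2:ℝ)/N))) := by
    intro v hv
    have hD := hDpos v hv
    have hsq : (N * Real.sqrt lam * Real.sqrt (c^2 - (f v)^((2:ℝ)/N)))^2
        = lam*N^2*(c^2 - (f v)^((2:ℝ)/N)) := by
      rw [mul_pow, mul_pow, Real.sq_sqrt hlam.le, Real.sq_sqrt hD.le]
      ring
    have hE := energy v (Ioo_subset_Ico_self hv)
    have h2 : F v = -Real.sqrt ((F v)^2) := by
      rw [Real.sqrt_sq_eq_abs, abs_of_nonpos (hFneg v hv).le, neg_neg]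
    rw [h2, hE, ← hsq, Real.sqrt_sq (by positivity)]
  -- step F : the substitution θ = arcsin(f^{1/N}/c)
  set θ : ℝ → ℝ := fun w => Real.arcsin ((f w)^((1:ℝ)/N) / c) with hθdef
  set S : ℝ → ℝ := fun x => ∫ t in (0:ℝ)..x, Real.sin t ^ (n-1) with hSdef
  have hSd : ∀ x : ℝ, HasDerivAt S (Real.sin x ^ (n-1)) x := fun x =>
    ((Real.continuous_sin.pow (n-1)).integral_hasStrictDerivAt 0 x).hasDerivAt
  have hScont : Continuous S := by
    rw [continuous_iff_continuousAt]; exact fun x => (hSd x).continuousAt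
  have hθcont : ContinuousOn θ (Icc 0 b) := by
    apply Real.continuous_arcsin.comp_continuousOn
    exact (hfcont.rpow_const (fun x hx => Or.inr (by positivity))).div_const c
  have hθ0 : θ 0 = π/2 := by
    simp only [hθdef, hf0_1N, div_self hc.ne', Real.arcsin_one]
  have hθb : θ b = 0 := by
    simp only [hθdef, hfb, Real.zero_rpow (by positivity : (1:ℝ)/N ≠ 0), zero_div,
      Real.arcsin_zero]
  set K : ℝ → ℝ := fun w => S (θ w) + (Real.sqrt lam / z) * w with hKdef
  have hKcont : ContinuousOn K (Icc 0 b) :=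
    (hScont.comp_continuousOn hθcont).add (Continuous.continuousOn (continuous_const.mul continuous_id))
  have hKd : ∀ v ∈ Ioo 0 b, HasDerivAt K 0 v := by
    intro v hv
    have hvI : v ∈ I := Ioo_subset_Ico_self hv
    have hy : 0 < f v := hfpos v hvI
    set y : ℝ := f v with hydef
    set u : ℝ := y^((1:ℝ)/N) / c with hudef
    have hu0 : 0 < u := by positivity
    have hu1 : u < 1 := by
      have : y^((1:ℝ)/N) < (f 0)^((1:ℝ)/N) :=
        Real.rpow_lt_rpow hy.le (hflt v hv) (by positivity)
      rw [hf0_1N] at this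
      rw [hudef, div_lt_one hc]
      exact this
    have hfat : HasDerivAt f (F v) v := (hFd v hvI).hasDerivAt (hnhds v hv)
    have d1 : HasDerivAt (fun w => (f w)^((1:ℝ)/N) / c)
        (F v * ((1:ℝ)/N) * y^((1:ℝ)/N - 1) / c) v :=
      (hfat.rpow_const (Or.inl hy.ne')).div_const c
    have d2 : HasDerivAt Real.arcsin (1 / Real.sqrt (1 - u^2)) u :=
      Real.hasDerivAt_arcsin (by linarith) hu1.ne
    have dθ : HasDerivAt θ (1 / Real.sqrt (1 - u^2) * (F v * ((1:ℝ)/N) * y^((1:ℝ)/N - 1) / c)) v :=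
      by have := d2.comp v d1; exact this
    have dS : HasDerivAt S (Real.sin (θ v) ^ (n-1)) (θ v) := hSd (θ v)
    have dSθ : HasDerivAt (fun w => S (θ w))
        (Real.sin (θ v) ^ (n-1) * (1 / Real.sqrt (1 - u^2) * (F v * ((1:ℝ)/N) * y^((1:ℝ)/N - 1) / c))) v :=
      dS.comp v dθ
    have dK := dSθ.add ((hasDerivAt_id v).const_mul (Real.sqrt lam / z))
    refine dK.congr_deriv ?_
    symm
    -- now compute that the derivative is 0
    have hθv : θ v = Real.arcsin u := rfl
    have hsin : Real.sin (θ v) = u := by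
      rw [hθv, Real.sin_arcsin (by linarith) hu1.le]
    have hD := hDpos v hv
    set D : ℝ := c^2 - y^((2:ℝ)/N) with hDdef
    have hsqD : 0 < Real.sqrt D := Real.sqrt_pos.mpr hD
    have h1u : 1 - u^2 = D / c^2 := by
      rw [hudef, div_pow, ← Real.rpow_natCast (y^((1:ℝ)/N)) 2, ← Real.rpow_mul hy.le]
      rw [hDdef]
      field_simp
      norm_num
    have hsq1u : Real.sqrt (1 - u^2) = Real.sqrt D / c := by
      rw [h1u, Real.sqrt_div hD.le, Real.sqrt_sq hc.le]
    have hupow : u^(n-1) = y^((N-1)/N) / c^(n-1) := by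
      rw [hudef, div_pow, ← Real.rpow_natCast (y^((1:ℝ)/N)) (n-1), ← Real.rpow_mul hy.le]
      congr 2
      rw [Nat.cast_sub (by omega : 1 ≤ n), Nat.cast_one, ← hNdef]
      ring
    have hcnz : (c:ℝ)^(n-1) = z := by
      rw [← Real.rpow_natCast c (n-1), Nat.cast_sub (by omega : 1 ≤ n), Nat.cast_one,
        ← hNdef, hcz]
    have hyy : y^((N-1)/N) * y^((1-N)/N) = 1 := by
      rw [← Real.rpow_add hy, show (N-1)/N + (1-N)/N = 0 by ring, Real.rpow_zero]
    rw [hsin, hFval v hv, hsq1u, hupow, hcnz, mul_one]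
    rw [← hydef, ← hDdef]
    clear_value y u D c N S θ K F
    field_simp
    linear_combination (Real.sqrt lam) * hyy
  -- K is constant
  have hconst : ∀ ε ∈ Ioo 0 b, K ε = K b := by
    intro ε hε
    have := constant_of_has_deriv_right_zero (f := K) (a := ε) (b := b)
      (hKcont.mono (Icc_subset_Icc hε.1.le le_rfl)) ?_ b ⟨hε.2.le, le_rfl⟩
    · exact this.symm
    · intro x hx
      exact (hKd x ⟨lt_of_lt_of_le hε.1 hx.1, hx.2⟩).hasDerivWithinAt
  have hmem : (0:ℝ) ∈ closure (Ioo 0 b) := by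
    rw [closure_Ioo hb.ne]; exact ⟨le_rfl, hb.le⟩
  have hne : (𝓝[Ioo 0 b] (0:ℝ)).NeBot := mem_closure_iff_nhdsWithin_neBot.mp hmem
  have h1 : Tendsto K (𝓝[Ioo 0 b] 0) (𝓝 (K 0)) :=
    (hKcont 0 ⟨le_rfl, hb.le⟩).mono_left (nhdsWithin_mono _ Ioo_subset_Icc_self)
  have h2 : Tendsto K (𝓝[Ioo 0 b] 0) (𝓝 (K b)) := by
    refine Tendsto.congr' ?_ tendsto_const_nhds
    filter_upwards [self_mem_nhdsWithin] with ε hε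
    exact (hconst ε hε).symm
  have hK0b : K 0 = K b := tendsto_nhds_unique h1 h2
  have e0 : K 0 = S (π/2) := by
    simp only [hKdef, hθ0, mul_zero, add_zero]
  have eb : K b = Real.sqrt lam / z * b := by
    simp only [hKdef, hθb, hSdef, intervalIntegral.integral_same, zero_add]
  have hcast : ((n-1:ℕ):ℝ) = N - 1 := by
    rw [Nat.cast_sub (by omega : 1 ≤ n), Nat.cast_one, hNdef]
  have hW : S (π/2) = Real.sqrt π/2 * Real.Gamma (N/2) / Real.Gamma ((N+1)/2) := by
    have hw := wallis_gamma (n-1)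
    rw [hcast] at hw
    rw [hSdef]
    simp only []
    rw [hw, show (N-1+1)/2 = N/2 by ring, show (N-1)/2+1 = (N+1)/2 by ring]
  have hEq : Real.sqrt lam / z * b = Real.sqrt π/2 * Real.Gamma (N/2) / Real.Gamma ((N+1)/2) := by
    rw [← eb, ← hK0b, e0, hW]
  have hsl : (0:ℝ) < Real.sqrt lam := Real.sqrt_pos.mpr hlam
  have hb' : b = (z/Real.sqrt lam) * (Real.sqrt lam / z * b) := by
    field_simp
  rw [hb', hEq]
  ring
end

section
/- Let n ≥ 3 be an integer, λ > 0, and a < b real numbers. Let F : [a, b] → (0, ∞) be continuous and positive, and suppose that for every v₀ ∈ (a, b) there exist σ > 0 and a twice continuously differentiable function U : (v₀ − σ, v₀ + σ) → ℝ with U ≥ F on (v₀ − σ, v₀ + σ) ∩ [a, b], U(v₀) = F(v₀), and U''(v₀) ≤ −λ·n·U(v₀)^{(2−n)/n}. Let f : [a, b] → ℝ be continuous, twice differentiable on (a, b), with f(v) > 0 and f''(v) = −λ·n·f(v)^{(2−n)/n} for all v ∈ (a, b), and assume f(a) < F(a) and f(b) < F(b). Then f(v) ≤ F(v) for all v ∈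 [a, b]. -/
open Set Filter Real Topology


lemma second_deriv_nonpos_of_isLocalMax {g : ℝ → ℝ} {x : ℝ}
    (hg : ∀ᶠ y in 𝓝 x, DifferentiableAt ℝ g y)
    (hg' : DifferentiableAt ℝ (deriv g) x)
    (hmax : IsLocalMax g x) : deriv (deriv g) x ≤ 0 := by
  by_contra hpos
  push_neg at hpos
  have h0 : deriv g x = 0 := hmax.deriv_eq_zero
  have hslope : Tendsto (slope (deriv g) x) (𝓝[≠] x) (𝓝 (deriv (deriv g) x)) :=
    hasDerivAt_iff_tendsto_slope.1 hg'.hasDerivAt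
  have hev : ∀ᶠ y in 𝓝[≠] x, 0 < slope (deriv g) x y :=
    hslope.eventually (eventually_gt_nhds hpos)
  -- combine into one neighborhood
  have hcomb : ∀ᶠ y in 𝓝 x, (DifferentiableAt ℝ g y ∧ g y ≤ g x) ∧
      (y ≠ x → 0 < slope (deriv g) x y) := by
    refine ((hg.and hmax).and ?_)
    simpa [eventually_nhdsWithin_iff] using hev
  obtain ⟨ε, hε, hball⟩ := Metric.eventually_nhds_iff_ball.1 hcomb
  set y := x + ε / 2 with hy
  have hyb : y ∈ Metric.ball x ε := by
    simp only [Metric.mem_ball, Real.dist_eq, hy, add_sub_cancel_left]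
    rw [abs_of_pos (by positivity)]; linarith
  have hxy : x < y := by simp [hy]; linarith
  have hsub : Icc x y ⊆ Metric.ball x ε := by
    intro z hz
    simp only [Metric.mem_ball, Real.dist_eq, abs_sub_lt_iff]
    constructor <;> [skip; linarith [hz.1, hz.2, hε]]
    · have := hz.2; simp only [hy] at this; linarith [hz.1]
  have hmono : StrictMonoOn g (Icc x y) := by
    apply strictMonoOn_of_deriv_pos (convex_Icc x y)
    · intro z hz
      exact ((hball z (hsub hz)).1.1).continuousAt.continuousWithinAt
    · intro z hz
      rw [interior_Icc] at hz
      have hz' := hball z (hsub ⟨hz.1.le, hz.2.le⟩)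
      have hs := hz'.2 (ne_of_gt hz.1)
      rw [slope_def_field] at hs
      have : (deriv g z - deriv g x) / (z - x) > 0 := by
        simpa [div_eq_inv_mul] using hs
      rw [h0, sub_zero] at this
      have hzx : 0 < z - x := by linarith [hz.1]
      rcases div_pos_iff.1 this with ⟨h1, _⟩ | ⟨_, h2⟩
      · exact h1
      · linarith
  have := hmono (left_mem_Icc.2 hxy.le) (right_mem_Icc.2 hxy.le) hxy
  exact absurd ((hball y hyb).1.2) (not_le.2 this)

/-- Comparison principle: no solution of `f'' = −λ n f^{(2−n)/n}` can touch from below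
a positive continuous function `F` satisfying `F'' ≤ −λnF^{(2−n)/n}` in the barrier
sense, provided `f < F` at both endpoints. -/
theorem ode_touching_comparison (n : ℕ) (hn : 3 ≤ n) (lam : ℝ) (hlam : 0 < lam)
    (a b : ℝ) (hab : a < b) (F f : ℝ → ℝ)
    (hFcont : ContinuousOn F (Icc a b))
    (hFpos : ∀ v ∈ Icc a b, 0 < F v)
    (hbarrier : ∀ v₀ ∈ Ioo a b, ∃ σ > 0, ∃ U : ℝ → ℝ,
      ContDiffOn ℝ 2 U (Ioo (v₀ - σ) (v₀ + σ)) ∧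
      (∀ v ∈ Ioo (v₀ - σ) (v₀ + σ) ∩ Icc a b, F v ≤ U v) ∧
      U v₀ = F v₀ ∧
      deriv (deriv U) v₀ ≤ -lam * n * (U v₀) ^ ((2 - (n : ℝ)) / n))
    (hfcont : ContinuousOn f (Icc a b))
    (hfdiff : ∀ v ∈ Ioo a b, DifferentiableAt ℝ f v)
    (hf'diff : ∀ v ∈ Ioo a b, DifferentiableAt ℝ (deriv f) v)
    (hfpos : ∀ v ∈ Ioo a b, 0 < f v)
    (hODE : ∀ v ∈ Ioo a b, deriv (deriv f) v = -lam * n * f v ^ ((2 - (n : ℝ)) / n))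
    (hfa : f a < F a) (hfb : f b < F b) :
    ∀ v ∈ Icc a b, f v ≤ F v := by
  set e : ℝ := (2 - (n : ℝ)) / n with he_def
  have hn0 : (0 : ℝ) < n := by positivity
  have he : e < 0 := by
    apply div_neg_of_neg_of_pos _ hn0
    have : (3 : ℝ) ≤ n := by exact_mod_cast hn
    linarith
  set g : ℝ → ℝ := fun v => f v - F v with hg_def
  have hgcont : ContinuousOn g (Icc a b) := hfcont.sub hFcont
  obtain ⟨c, hcmem, hcmax⟩ := isCompact_Icc.exists_isMaxOn (nonempty_Icc.2 hab.le)
    hgcont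
  suffices hgc : g c ≤ 0 by
    intro v hv
    have := hcmax hv
    simp only [hg_def, mem_setOf_eq] at this hgc
    linarith
  by_contra hc
  push_neg at hc
  have hca : c ≠ a := by
    rintro rfl; simp only [hg_def] at hc; linarith
  have hcb : c ≠ b := by
    rintro rfl; simp only [hg_def] at hc; linarith
  have hcIoo : c ∈ Ioo a b := ⟨lt_of_le_of_ne hcmem.1 (Ne.symm hca), lt_of_le_of_ne hcmem.2 hcb⟩
  obtain ⟨σ, hσ, U, hU, hUF, hUc, hU''⟩ := hbarrier c hcIoo
  have hcs : c ∈ Ioo (c - σ) (c + σ) := by constructor <;> simp <;> linarith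
  -- differentiability facts for U
  have hUdiff : ∀ y ∈ Ioo (c - σ) (c + σ), DifferentiableAt ℝ U y := fun y hy =>
    (hU.differentiableOn (by norm_num)).differentiableAt (isOpen_Ioo.mem_nhds hy)
  have hU'C1 : ContDiffOn ℝ 1 (deriv U) (Ioo (c - σ) (c + σ)) :=
    hU.deriv_of_isOpen isOpen_Ioo (by norm_num)
  have hU'diff : DifferentiableAt ℝ (deriv U) c :=
    (hU'C1.differentiableOn one_ne_zero).differentiableAt (isOpen_Ioo.mem_nhds hcs)
  set h : ℝ → ℝ := fun v => f v - U v with hh_def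
  have hnhds : (Ioo (c - σ) (c + σ) ∩ Ioo a b) ∈ 𝓝 c :=
    (isOpen_Ioo.inter isOpen_Ioo).mem_nhds ⟨hcs, hcIoo⟩
  have hmax : IsLocalMax h c := by
    filter_upwards [hnhds] with v hv
    have h1 : F v ≤ U v := hUF v ⟨hv.1, ⟨hv.2.1.le, hv.2.2.le⟩⟩
    have h2 : g v ≤ g c := hcmax ⟨hv.2.1.le, hv.2.2.le⟩
    simp only [hg_def] at h2
    simp only [hh_def, hUc]
    linarith
  have hhdiff : ∀ᶠ y in 𝓝 c, DifferentiableAt ℝ h y := by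
    filter_upwards [hnhds] with v hv
    exact (hfdiff v hv.2).sub (hUdiff v hv.1)
  have hderiv_ev : deriv h =ᶠ[𝓝 c] fun y => deriv f y - deriv U y := by
    filter_upwards [hnhds] with v hv
    exact deriv_sub (hfdiff v hv.2) (hUdiff v hv.1)
  have hsubdiff : DifferentiableAt ℝ (fun y => deriv f y - deriv U y) c :=
    (hf'diff c hcIoo).sub hU'diff
  have hh'diff : DifferentiableAt ℝ (deriv h) c :=
    hsubdiff.congr_of_eventuallyEq hderiv_ev
  have hkey : deriv (deriv h) c ≤ 0 :=
    second_deriv_nonpos_of_isLocalMax hhdiff hh'diff hmax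
  have hcomp : deriv (deriv h) c = deriv (deriv f) c - deriv (deriv U) c := by
    rw [hderiv_ev.deriv_eq]
    exact deriv_sub (hf'diff c hcIoo) hU'diff
  rw [hcomp] at hkey
  have hODEc := hODE c hcIoo
  have hFc : 0 < F c := hFpos c hcmem
  have hFf : F c < f c := by simp only [hg_def] at hc; linarith
  have hrpow : f c ^ e < F c ^ e := Real.rpow_lt_rpow_of_neg hFc hFf he
  have h1 : deriv (deriv f) c ≤ deriv (deriv U) c := by linarith
  rw [hODEc, hUc] at *
  have h2 : deriv (deriv U) c ≤ -lam * n * F c ^ e := hU''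
  nlinarith [mul_pos hlam hn0]
end

section
/- Let n ≥ 3 be an integer, λ > 0, z > 0, and set β = (z/(2√λ))·√π·Γ(n/2)/Γ((n+1)/2). Then there exists a function f : [−β, β] → ℝ such that: f is continuous on [−β, β] and twice continuously differentiable on (−β, β); f(v) > 0 for all v ∈ (−β, β); f(−β) = f(β) = 0; f(0) = z^{n/(n−1)} and f'(0) = 0; f''(v) = −λ·n·f(v)^{(2−n)/n} and f'(v)² = λ·n²·z^{2/(n−1)} − λ·n²·f(v)^{2/n} for all v ∈ (−β, β); f is even, i.e. f(−v) = f(v) for all v ∈ [−β, β]; and f'(v) → √λ·n·z^{1/(n−1)} as v → (−β)⁺. -/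
open Set Filter Real

lemma wallis_cos (k : ℕ) :
    ∫ x in (0:ℝ)..(π/2), Real.cos x ^ k
      = Real.sqrt π / 2 * Real.Gamma (((k:ℝ)+1)/2) / Real.Gamma ((k:ℝ)/2 + 1) := by
  induction k using Nat.twoStepInduction with
  | zero =>
      simp only [Nat.cast_zero, pow_zero]
      have h0 : ∫ x in (0:ℝ)..(π/2), (1:ℝ) = π/2 := by simp
      rw [h0,
        show ((0:ℝ)+1)/2 = 1/2 by norm_num, show (0:ℝ)/2+1 = 1 by norm_num,
        Real.Gamma_one_half_eq, Real.Gamma_one, div_one, div_mul_eq_mul_div,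
        Real.mul_self_sqrt Real.pi_pos.le]
  | one =>
      have h0 : ∫ x in (0:ℝ)..(π/2), Real.cos x ^ (1:ℕ) = 1 := by
        norm_num [integral_cos]
      rw [h0, Nat.cast_one, show ((1:ℝ)+1)/2 = 1 by norm_num, Real.Gamma_one,
        Real.Gamma_add_one (by norm_num : (1/2:ℝ) ≠ 0), Real.Gamma_one_half_eq]
      have : (0:ℝ) < Real.sqrt π := Real.sqrt_pos.2 Real.pi_pos
      field_simp
  | more k ih ih' =>
      rw [integral_cos_pow]
      simp only [Real.cos_pi_div_two, Real.sin_zero, Real.cos_zero, Real.sin_pi_div_two,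
        mul_zero, zero_mul, mul_one, one_pow, zero_pow (Nat.succ_ne_zero k), sub_zero,
        zero_sub, zero_div, neg_zero, zero_add]
      rw [ih]
      have e1 : (((k+2:ℕ)):ℝ)/2 + 1 = ((k:ℝ)/2 + 1) + 1 := by push_cast; ring
      have e2 : ((((k+2:ℕ)):ℝ)+1)/2 = (((k:ℝ)+1)/2) + 1 := by push_cast; ring
      rw [e1, e2, Real.Gamma_add_one (by positivity : ((k:ℝ)+1)/2 ≠ 0),
        Real.Gamma_add_one (by positivity : ((k:ℝ)/2 + 1) ≠ 0)]
      have hΓ : Real.Gamma ((k:ℝ)/2 + 1) ≠ 0 := (Real.Gamma_pos_of_pos (by positivity)).ne'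
      have hk2 : ((k:ℝ)+2) ≠ 0 := by positivity
      have hk21 : ((k:ℝ)/2+1) ≠ 0 := by positivity
      field_simp

lemma strictMono_glue {f : ℝ → ℝ} {p q : ℝ} (hpq : p ≤ q)
    (h1 : StrictMonoOn f (Iic p)) (h2 : StrictMonoOn f (Icc p q))
    (h3 : StrictMonoOn f (Ici q)) : StrictMono f := by
  have m1 : ∀ u v, u ≤ v → v ≤ p → f u ≤ f v := fun u v huv hv =>
    h1.monotoneOn (le_trans huv hv) hv huv
  have m2 : ∀ u v, p ≤ u → u ≤ v → v ≤ q → f u ≤ f v := fun u v hu huv hv =>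
    h2.monotoneOn ⟨hu, le_trans huv hv⟩ ⟨le_trans hu huv, hv⟩ huv
  have m3 : ∀ u v, q ≤ u → u ≤ v → f u ≤ f v := fun u v hu huv =>
    h3.monotoneOn hu (le_trans hu huv) huv
  intro x y hxy
  rcases le_or_gt y p with hy | hy
  · exact h1 (hxy.le.trans hy) hy hxy
  rcases le_or_gt q x with hx | hx
  · exact h3 hx (hx.trans hxy.le) hxy
  rcases le_or_gt x p with hxp | hxp
  · rcases le_or_gt y q with hyq | hyq
    · exact lt_of_le_of_lt (m1 x p hxp le_rfl) (h2 ⟨le_rfl, hpq⟩ ⟨hy.le, hyq⟩ hy)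
    · exact lt_of_le_of_lt (le_trans (m1 x p hxp le_rfl) (m2 p q le_rfl hpq le_rfl))
        (h3 (mem_Ici.2 le_rfl) hyq.le hyq)
  · rcases le_or_gt y q with hyq | hyq
    · exact h2 ⟨hxp.le, hx.le⟩ ⟨hxp.le.trans hxy.le, hyq⟩ hxy
    · exact lt_of_lt_of_le (h2 ⟨hxp.le, hx.le⟩ ⟨hpq, le_rfl⟩ hx) (m3 q y le_rfl hyq.le)

set_option maxHeartbeats 2000000

/-- Existence of the model comparison profile `f_z`: the solution of
`f'' = −λ n f^{(2−n)/n}` with maximum `z^{n/(n−1)}` at `0`, positive exactly on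
`(−β, β)` with `β = (z/(2√λ))·√π·Γ(n/2)/Γ((n+1)/2)`, vanishing at `±β`, even,
with limiting slope `√λ·n·z^{1/(n−1)}` at `−β`. -/
theorem exists_model_profile (n : ℕ) (hn : 3 ≤ n) (lam z : ℝ) (hlam : 0 < lam)
    (hz : 0 < z) (β : ℝ)
    (hβ : β = (z / (2 * Real.sqrt lam)) * Real.sqrt π * Real.Gamma ((n : ℝ) / 2) /
      Real.Gamma (((n : ℝ) + 1) / 2)) :
    ∃ f : ℝ → ℝ,
      ContinuousOn f (Icc (-β) β) ∧
      ContDiffOn ℝ 2 f (Ioo (-β) β) ∧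
      (∀ v ∈ Ioo (-β) β, 0 < f v) ∧
      f (-β) = 0 ∧ f β = 0 ∧
      f 0 = z ^ ((n : ℝ) / ((n : ℝ) - 1)) ∧ deriv f 0 = 0 ∧
      (∀ v ∈ Ioo (-β) β,
        deriv (deriv f) v = -lam * n * f v ^ ((2 - (n : ℝ)) / n)) ∧
      (∀ v ∈ Ioo (-β) β,
        deriv f v ^ 2 = lam * (n : ℝ) ^ 2 * z ^ ((2 : ℝ) / ((n : ℝ) - 1)) -
          lam * (n : ℝ) ^ 2 * f v ^ ((2 : ℝ) / n)) ∧
      (∀ v ∈ Icc (-β) β, f (-v) = f v) ∧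
      Tendsto (deriv f) (nhdsWithin (-β) (Ioi (-β)))
        (nhds (Real.sqrt lam * n * z ^ ((1 : ℝ) / ((n : ℝ) - 1)))) := by
  have hn3 : (3:ℝ) ≤ (n:ℝ) := by exact_mod_cast hn
  have hn0 : (0:ℝ) < (n:ℝ) := by linarith
  have hn1 : (0:ℝ) < (n:ℝ) - 1 := by linarith
  have hpi : (0:ℝ) < π := Real.pi_pos
  set s := Real.sqrt lam with hs_def
  have hs : 0 < s := Real.sqrt_pos.2 hlam
  have hs2 : s * s = lam := Real.mul_self_sqrt hlam.le
  set K := z / s with hK_def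
  have hK : 0 < K := div_pos hz hs
  set a := z ^ ((1:ℝ)/((n:ℝ)-1)) with ha_def
  have ha : 0 < a := Real.rpow_pos_of_pos hz _
  set c := z ^ ((n:ℝ)/((n:ℝ)-1)) with hc_def
  have hc : 0 < c := Real.rpow_pos_of_pos hz _
  have hca : c = z * a := by
    rw [hc_def, ha_def, show (n:ℝ)/((n:ℝ)-1) = 1 + 1/((n:ℝ)-1) by field_simp; ring,
      Real.rpow_add hz, Real.rpow_one]
  -- the integrand
  set g : ℝ → ℝ := fun t => max (Real.cos t) 0 ^ (n-1) + max (|t| - π/2) 0 ^ 2 with hg_def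
  have hg_cont : Continuous g :=
    ((Real.continuous_cos.max continuous_const).pow _).add
      (((continuous_abs.sub continuous_const).max continuous_const).pow _)
  have hg_nonneg : ∀ t, 0 ≤ g t := fun t => by
    simp only [hg_def]; positivity
  have hg_eq : ∀ t ∈ Icc (-(π/2)) (π/2), g t = Real.cos t ^ (n-1) := by
    intro t ht
    have h1 : max (Real.cos t) 0 = Real.cos t := max_eq_left (Real.cos_nonneg_of_mem_Icc ht)
    have h2 : max (|t| - π/2) 0 = 0 := max_eq_right (by
      rw [sub_nonpos]; exact abs_le.2 ⟨ht.1, ht.2⟩)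
    simp only [hg_def, h1, h2]
    norm_num
  have hg_pos : ∀ t ∈ Ioo (-(π/2)) (π/2), 0 < g t := by
    intro t ht
    have hcost : 0 < Real.cos t := Real.cos_pos_of_mem_Ioo ht
    have h1 : 0 < max (Real.cos t) 0 ^ (n-1) := pow_pos (lt_max_iff.2 (Or.inl hcost)) _
    simp only [hg_def]
    have h2 : (0:ℝ) ≤ max (|t| - π/2) 0 ^ 2 := by positivity
    linarith
  have hg_pos' : ∀ t : ℝ, π/2 < |t| → 0 < g t := by
    intro t ht
    have h2 : 0 < max (|t| - π/2) 0 ^ 2 :=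
      pow_pos (lt_max_iff.2 (Or.inl (by linarith))) _
    have h1 : (0:ℝ) ≤ max (Real.cos t) 0 ^ (n-1) := by positivity
    simp only [hg_def]
    linarith
  have hg_even : ∀ t, g (-t) = g t := fun t => by
    simp only [hg_def, Real.cos_neg, abs_neg]
  -- the parametrisation
  set G : ℝ → ℝ := fun φ => K * ∫ t in (0:ℝ)..φ, g t with hG_def
  have hGd : ∀ φ, HasDerivAt G (K * g φ) φ := fun φ =>
    ((hg_cont.integral_hasStrictDerivAt 0 φ).hasDerivAt).const_mul K
  have hG_cont : Continuous G := continuous_iff_continuousAt.2 fun φ => (hGd φ).continuousAt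
  have hG0 : G 0 = 0 := by simp only [hG_def]; simp
  have hmono : StrictMono G := by
    apply strictMono_glue (show -(π/2) ≤ π/2 by linarith)
    · apply strictMonoOn_of_deriv_pos (convex_Iic _) hG_cont.continuousOn
      intro x hx
      rw [interior_Iic] at hx
      rw [(hGd x).deriv]
      refine mul_pos hK (hg_pos' x ?_)
      rw [abs_of_neg (by linarith [mem_Iio.1 hx])]
      linarith [mem_Iio.1 hx]
    · apply strictMonoOn_of_deriv_pos (convex_Icc _ _) hG_cont.continuousOn
      intro x hx
      rw [interior_Icc] at hx
      rw [(hGd x).deriv]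
      exact mul_pos hK (hg_pos x hx)
    · apply strictMonoOn_of_deriv_pos (convex_Ici _) hG_cont.continuousOn
      intro x hx
      rw [interior_Ici] at hx
      rw [(hGd x).deriv]
      refine mul_pos hK (hg_pos' x ?_)
      rw [abs_of_pos (by linarith [mem_Ioi.1 hx])]
      exact mem_Ioi.1 hx
  have hG_odd : ∀ φ, G (-φ) = -G φ := by
    intro φ
    have h2 : ∫ t in (0:ℝ)..φ, g (-t) = ∫ t in (-φ)..(0:ℝ), g t := by
      simpa using intervalIntegral.integral_comp_neg (a := (0:ℝ)) (b := φ) g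
    have h3 : ∫ t in (0:ℝ)..φ, g (-t) = ∫ t in (0:ℝ)..φ, g t := by
      apply intervalIntegral.integral_congr
      intro x _
      exact hg_even x
    have h4 : ∫ t in (0:ℝ)..(-φ), g t = -∫ t in (-φ)..(0:ℝ), g t :=
      intervalIntegral.integral_symm _ _
    simp only [hG_def]
    rw [h4, ← h2, h3]
    ring
  -- growth and surjectivity
  have hgrow : ∀ t, π/2 + 1 ≤ t → G (π/2+1) + K * (t - (π/2+1)) ≤ G t := by
    intro t ht
    have hint : ∫ u in (π/2+1)..t, (1:ℝ) ≤ ∫ u in (π/2+1)..t, g u := by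
      apply intervalIntegral.integral_mono_on ht intervalIntegrable_const
        (hg_cont.intervalIntegrable _ _)
      intro x hx
      have hx1 : π/2 + 1 ≤ x := hx.1
      have h2 : 1 ≤ |x| - π/2 := by
        rw [abs_of_pos (by linarith)]; linarith
      have h5 : 1 ≤ max (|x| - π/2) 0 := le_max_iff.2 (Or.inl h2)
      have h6 : (1:ℝ) ≤ max (|x| - π/2) 0 ^ 2 := by nlinarith
      have h7 : (0:ℝ) ≤ max (Real.cos x) 0 ^ (n-1) := by positivity
      simp only [hg_def]
      linarith
    have hsplit : (∫ u in (0:ℝ)..(π/2+1), g u) + ∫ u in (π/2+1)..t, g u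
        = ∫ u in (0:ℝ)..t, g u :=
      intervalIntegral.integral_add_adjacent_intervals (hg_cont.intervalIntegrable _ _)
        (hg_cont.intervalIntegrable _ _)
    have h1 : ∫ u in (π/2+1)..t, (1:ℝ) = t - (π/2+1) := by simp
    rw [h1] at hint
    simp only [hG_def]
    nlinarith [hint, hsplit, hK]
  have htop : Tendsto G atTop atTop := by
    apply tendsto_atTop_mono' atTop (eventually_atTop.2 ⟨π/2+1, hgrow⟩)
    exact tendsto_atTop_add_const_left _ _
      (Tendsto.const_mul_atTop hK (tendsto_atTop_add_const_right _ _ tendsto_id))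
  have hbot : Tendsto G atBot atBot := by
    have h1 : Tendsto (fun t => -G (-t)) atBot atBot :=
      tendsto_neg_atTop_atBot.comp (htop.comp tendsto_neg_atBot_atTop)
    have h2 : (fun t => -G (-t)) = G := funext fun t => by rw [hG_odd]; ring
    rwa [h2] at h1
  have hsurj : Function.Surjective G := hG_cont.surjective htop hbot
  -- the inverse
  set Φ : ℝ → ℝ := fun v => (StrictMono.orderIsoOfSurjective G hmono hsurj).symm v with hΦ_def
  have hΦG : ∀ x, Φ (G x) = x := fun x =>
    StrictMono.orderIsoOfSurjective_symm_apply_self G hmono hsurj x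
  have hGΦ : ∀ v, G (Φ v) = v := fun v =>
    StrictMono.orderIsoOfSurjective_self_symm_apply G hmono hsurj v
  have hΦcont : Continuous Φ :=
    (StrictMono.orderIsoOfSurjective G hmono hsurj).symm.continuous
  have hΦmono : StrictMono Φ :=
    (StrictMono.orderIsoOfSurjective G hmono hsurj).symm.strictMono
  have hΦodd : ∀ v, Φ (-v) = -Φ v := by
    intro v
    apply hmono.injective
    rw [hGΦ, hG_odd, hGΦ]
  -- value of G at π/2
  have hGβ : G (π/2) = β := by
    have hint : ∫ t in (0:ℝ)..(π/2), g t = ∫ t in (0:ℝ)..(π/2), Real.cos t ^ (n-1) := by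
      apply intervalIntegral.integral_congr
      intro t ht
      rw [uIcc_of_le (by positivity)] at ht
      exact hg_eq t ⟨by linarith [ht.1], ht.2⟩
    have hcast : ((n-1:ℕ):ℝ) = (n:ℝ) - 1 := by
      rw [Nat.cast_sub (by omega : 1 ≤ n), Nat.cast_one]
    have hw := wallis_cos (n-1)
    rw [hcast] at hw
    have hΓ : Real.Gamma (((n:ℝ)+1)/2) ≠ 0 := (Real.Gamma_pos_of_pos (by linarith)).ne'
    simp only [hG_def]
    rw [hint, hw, hβ, show ((n:ℝ)-1+1)/2 = (n:ℝ)/2 by ring,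
      show ((n:ℝ)-1)/2+1 = ((n:ℝ)+1)/2 by ring, hK_def]
    field_simp
  have hGmβ : G (-(π/2)) = -β := by rw [hG_odd, hGβ]
  have hβpos : 0 < β := by
    have h1 := hmono (show (0:ℝ) < π/2 by positivity)
    rwa [hG0, hGβ] at h1
  have hΦβ : Φ β = π/2 := by rw [← hGβ, hΦG]
  have hΦmβ : Φ (-β) = -(π/2) := by rw [← hGmβ, hΦG]
  have hΦ0 : Φ 0 = 0 := by
    conv_lhs => rw [← hG0]
    rw [hΦG]
  have hΦmem : ∀ v ∈ Ioo (-β) β, Φ v ∈ Ioo (-(π/2)) (π/2) := fun v hv =>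
    ⟨hΦmβ ▸ hΦmono hv.1, hΦβ ▸ hΦmono hv.2⟩
  -- the profile
  set f : ℝ → ℝ := fun v => c * Real.cos (Φ v) ^ n with hf_def
  set F : ℝ → ℝ := fun v => -(n:ℝ) * s * a * Real.sin (Φ v) with hF_def
  have hF_cont : Continuous F :=
    continuous_const.mul (Real.continuous_sin.comp hΦcont)
  -- derivative facts on the open interval
  have hΦd : ∀ v ∈ Ioo (-β) β, HasDerivAt Φ ((K * g (Φ v))⁻¹) v := by
    intro v hv
    exact HasDerivAt.of_local_left_inverse hΦcont.continuousAt (hGd (Φ v))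
      (ne_of_gt (mul_pos hK (hg_pos _ (hΦmem v hv)))) (Eventually.of_forall hGΦ)
  have hfd : ∀ v ∈ Ioo (-β) β, HasDerivAt f (F v) v := by
    intro v hv
    have hφ := hΦmem v hv
    have hcos : 0 < Real.cos (Φ v) := Real.cos_pos_of_mem_Ioo hφ
    have hgφ : g (Φ v) = Real.cos (Φ v) ^ (n-1) := hg_eq _ (Ioo_subset_Icc_self hφ)
    have hd2 : HasDerivAt (fun w => Real.cos (Φ w))
        (-Real.sin (Φ v) * (K * g (Φ v))⁻¹) v :=
      (Real.hasDerivAt_cos (Φ v)).comp v (hΦd v hv)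
    have hd3 : HasDerivAt f
        (c * ((n:ℕ) * Real.cos (Φ v) ^ (n-1) * (-Real.sin (Φ v) * (K * g (Φ v))⁻¹))) v :=
      (hd2.pow n).const_mul c
    have hval : c * ((n:ℕ) * Real.cos (Φ v) ^ (n-1) * (-Real.sin (Φ v) * (K * g (Φ v))⁻¹))
        = F v := by
      simp only [hF_def]
      rw [hgφ, hca, hK_def]
      have hcne : Real.cos (Φ v) ^ (n-1) ≠ 0 := by positivity
      field_simp
    rwa [hval] at hd3
  have hderiv_eq : ∀ v ∈ Ioo (-β) β, deriv f v = F v := fun v hv => (hfd v hv).deriv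
  have hFd : ∀ v ∈ Ioo (-β) β,
      HasDerivAt F (-(n:ℝ) * s * a * (Real.cos (Φ v) * (K * g (Φ v))⁻¹)) v := by
    intro v hv
    have hd1 : HasDerivAt (fun w => Real.sin (Φ w))
        (Real.cos (Φ v) * (K * g (Φ v))⁻¹) v :=
      (Real.hasDerivAt_sin (Φ v)).comp v (hΦd v hv)
    exact hd1.const_mul _
  -- rpow facts
  have hcastn1 : ((n-1:ℕ):ℝ) = (n:ℝ) - 1 := by
    rw [Nat.cast_sub (by omega : 1 ≤ n), Nat.cast_one]
  -- ### assemble the statement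
  refine ⟨f, ?_, ?_, ?_, ?_, ?_, ?_, ?_, ?_, ?_, ?_, ?_⟩
  · -- continuity
    exact (continuous_const.mul ((Real.continuous_cos.comp hΦcont).pow n)).continuousOn
  · -- C²
    have hopen : IsOpen (Ioo (-β) β) := isOpen_Ioo
    have hU : UniqueDiffOn ℝ (Ioo (-β) β) := hopen.uniqueDiffOn
    rw [show (2 : WithTop ℕ∞) = 1 + 1 by norm_num, contDiffOn_succ_iff_derivWithin hU]
    refine ⟨fun v hv => (hfd v hv).differentiableAt.differentiableWithinAt,
      by intro h; simp at h, ?_⟩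
    have hF1 : ContDiffOn ℝ 1 F (Ioo (-β) β) := by
      rw [show (1 : WithTop ℕ∞) = 0 + 1 by norm_num, contDiffOn_succ_iff_derivWithin hU]
      refine ⟨fun v hv => (hFd v hv).differentiableAt.differentiableWithinAt,
        by intro h; simp at h, ?_⟩
      rw [contDiffOn_zero]
      have hF2cont : ContinuousOn
          (fun v => -(n:ℝ) * s * a * (Real.cos (Φ v) * (K * g (Φ v))⁻¹)) (Ioo (-β) β) := by
        apply continuousOn_const.mul
        apply ((Real.continuous_cos.comp hΦcont).continuousOn).mul
        apply ContinuousOn.inv₀ (continuous_const.mul (hg_cont.comp hΦcont)).continuousOn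
        exact fun v hv => (mul_pos hK (hg_pos _ (hΦmem v hv))).ne'
      apply hF2cont.congr
      intro v hv
      rw [derivWithin_of_isOpen hopen hv, (hFd v hv).deriv]
    apply hF1.congr
    intro v hv
    rw [derivWithin_of_isOpen hopen hv, hderiv_eq v hv]
  · -- positivity
    intro v hv
    have hcos : 0 < Real.cos (Φ v) := Real.cos_pos_of_mem_Ioo (hΦmem v hv)
    simp only [hf_def]
    positivity
  · -- f (-β) = 0
    simp only [hf_def]
    rw [hΦmβ, Real.cos_neg, Real.cos_pi_div_two, zero_pow (by omega : n ≠ 0), mul_zero]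
  · -- f β = 0
    simp only [hf_def]
    rw [hΦβ, Real.cos_pi_div_two, zero_pow (by omega : n ≠ 0), mul_zero]
  · -- f 0 = c
    simp only [hf_def]
    rw [hΦ0, Real.cos_zero, one_pow, mul_one, hc_def]
  · -- deriv f 0 = 0
    have h0 : (0:ℝ) ∈ Ioo (-β) β := ⟨by linarith, hβpos⟩
    rw [hderiv_eq 0 h0]
    simp only [hF_def]
    rw [hΦ0, Real.sin_zero, mul_zero]
  · -- the ODE
    intro v hv
    have hφ := hΦmem v hv
    have hcos : 0 < Real.cos (Φ v) := Real.cos_pos_of_mem_Ioo hφ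
    have hgφ : g (Φ v) = Real.cos (Φ v) ^ (n-1) := hg_eq _ (Ioo_subset_Icc_self hφ)
    have hev : deriv f =ᶠ[nhds v] F :=
      eventually_of_mem (isOpen_Ioo.mem_nhds hv) (fun w hw => hderiv_eq w hw)
    rw [hev.deriv_eq, (hFd v hv).deriv, hgφ]
    simp only [hf_def]
    set C := Real.cos (Φ v) with hC_def
    have hCrpos : 0 < C ^ ((n:ℝ)-1) := Real.rpow_pos_of_pos hcos _
    have hCn1 : C ^ (n-1) = C ^ ((n:ℝ) - 1) := by
      rw [← Real.rpow_natCast C (n-1), hcastn1]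
    have hz2 : a / z = z ^ ((2 - (n:ℝ))/((n:ℝ)-1)) := by
      rw [ha_def, div_eq_mul_inv, ← Real.rpow_neg_one z, ← Real.rpow_add hz,
        show 1/((n:ℝ)-1) + (-1) = (2 - (n:ℝ))/((n:ℝ)-1) by field_simp; ring]
    have hC2 : C * (C ^ ((n:ℝ)-1))⁻¹ = C ^ ((2:ℝ) - n) := by
      have e : C ^ ((2:ℝ) - n) * C ^ ((n:ℝ)-1) = C := by
        rw [← Real.rpow_add hcos, show (2:ℝ) - n + ((n:ℝ)-1) = 1 by ring, Real.rpow_one]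
      field_simp
      linarith [e]
    have hRHS : (c * C ^ n) ^ ((2 - (n:ℝ))/(n:ℝ))
        = z ^ ((2 - (n:ℝ))/((n:ℝ)-1)) * C ^ ((2:ℝ) - n) := by
      rw [Real.mul_rpow hc.le (by positivity), hc_def, ← Real.rpow_natCast C n,
        ← Real.rpow_mul hz.le, ← Real.rpow_mul hcos.le,
        show (n:ℝ)/((n:ℝ)-1) * ((2 - (n:ℝ))/(n:ℝ)) = (2 - (n:ℝ))/((n:ℝ)-1) by
          field_simp,
        show (n:ℝ) * ((2 - (n:ℝ))/(n:ℝ)) = (2:ℝ) - n by field_simp]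
    rw [hRHS, hCn1, mul_inv,
      show C * (K⁻¹ * (C ^ ((n:ℝ)-1))⁻¹) = K⁻¹ * (C * (C ^ ((n:ℝ)-1))⁻¹) by ring,
      hC2, ← hz2, hK_def, ← hs2]
    rw [inv_div]
    ring
  · -- first integral
    intro v hv
    have hφ := hΦmem v hv
    have hcos : 0 < Real.cos (Φ v) := Real.cos_pos_of_mem_Ioo hφ
    rw [hderiv_eq v hv]
    simp only [hf_def, hF_def]
    set C := Real.cos (Φ v) with hC_def
    have h2 : a * a = z ^ ((2:ℝ)/((n:ℝ)-1)) := by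
      rw [ha_def, ← Real.rpow_add hz,
        show 1/((n:ℝ)-1) + 1/((n:ℝ)-1) = (2:ℝ)/((n:ℝ)-1) by ring]
    have h1 : (c * C ^ n) ^ ((2:ℝ)/(n:ℝ)) = z ^ ((2:ℝ)/((n:ℝ)-1)) * C ^ 2 := by
      rw [Real.mul_rpow hc.le (by positivity), hc_def, ← Real.rpow_natCast C n,
        ← Real.rpow_mul hz.le, ← Real.rpow_mul hcos.le,
        show (n:ℝ)/((n:ℝ)-1) * ((2:ℝ)/(n:ℝ)) = 2/((n:ℝ)-1) by field_simp,
        show (n:ℝ) * ((2:ℝ)/(n:ℝ)) = (2:ℝ) by field_simp,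
        show (2:ℝ) = ((2:ℕ):ℝ) by norm_num, Real.rpow_natCast]
    have h3 : Real.sin (Φ v) ^ 2 = 1 - C ^ 2 := Real.sin_sq (Φ v)
    rw [h1]
    calc (-(n:ℝ) * s * a * Real.sin (Φ v)) ^ 2
        = (n:ℝ)^2 * (s*s) * (a*a) * Real.sin (Φ v) ^ 2 := by ring
      _ = lam * (n:ℝ)^2 * z ^ ((2:ℝ)/((n:ℝ)-1))
          - lam * (n:ℝ)^2 * (z ^ ((2:ℝ)/((n:ℝ)-1)) * C^2) := by
          rw [hs2, h2, h3]; ring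
  · -- evenness
    intro v _
    simp only [hf_def]
    rw [hΦodd, Real.cos_neg]
  · -- limit of the slope at -β
    have hmem : Ioo (-β) β ∈ nhdsWithin (-β) (Ioi (-β)) :=
      Ioo_mem_nhdsGT_of_mem ⟨le_refl _, by linarith⟩
    have heq : (fun v => F v) =ᶠ[nhdsWithin (-β) (Ioi (-β))] deriv f :=
      eventually_of_mem hmem (fun v hv => (hderiv_eq v hv).symm)
    have hFt : Tendsto F (nhdsWithin (-β) (Ioi (-β))) (nhds (F (-β))) :=
      (hF_cont.tendsto _).mono_left nhdsWithin_le_nhds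
    have hFval : F (-β) = s * (n:ℝ) * a := by
      simp only [hF_def]
      rw [hΦmβ, Real.sin_neg, Real.sin_pi_div_two]
      ring
    rw [← hFval]
    exact hFt.congr' heq
end
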